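/- ℓ1-norm bound for noisy constrained recovery (deterministic form): Let y = x + z with x ∈ S_i, ‖x‖₂ = 1, and ‖z‖₂ ≤ ε. Let X_i have unit columns spanning S_i with inradius r_i, Y_i = X_i + Z_i, and assume ‖Z_i c‖₂ ≤ Kε‖c‖₁ for all c. With γ = 2(1 + K/r_i), the optimal value of min ‖c‖₁ s.t. ‖y − [Y_i Y_{-i}] c‖₂ ≤ γε is at most 1/r_i. -/

import Mathlib

open scoped BigOperators

/-- Euclidean (ℓ2) norm of a vector. -/
noncomputable def l2 {n : ℕ} (v : Fin n → ℝ) : ℝ := Real.sqrt (∑ i, (v i) ^ 2)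

/-- ℓ1 norm of a vector. -/
noncomputable def l1 {n : ℕ} (v : Fin n → ℝ) : ℝ := ∑ i, |v i|

/-- Matrix-vector product, where the matrix is given by its columns. -/
noncomputable def mv {n N : ℕ} (A : Fin N → Fin n → ℝ) (c : Fin N → ℝ) : Fin n → ℝ :=
  ∑ j, c j • A j

/-- Euclidean inner product. -/
noncomputable def dot {n : ℕ} (v w : Fin n → ℝ) : ℝ := ∑ i, v i * w i

/-- Symmetrized convex hull of the columns of `X`. -/
def symmHull {n N : ℕ} (X : Fin N → Fin n → ℝ) : Set (Fin n → ℝ) :=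
  convexHull ℝ (Set.range X ∪ Set.range (fun j => -X j))

lemma l2_eq_norm {n : ℕ} (v : Fin n → ℝ) :
    l2 v = ‖(WithLp.equiv 2 (Fin n → ℝ)).symm v‖ := by
  rw [EuclideanSpace.norm_eq]
  simp [l2, sq_abs]

lemma l2_add_le {n : ℕ} (a b : Fin n → ℝ) : l2 (a + b) ≤ l2 a + l2 b := by
  simp only [l2_eq_norm]
  simpa using norm_add_le ((WithLp.equiv 2 (Fin n → ℝ)).symm a) ((WithLp.equiv 2 (Fin n → ℝ)).symm b)

lemma l2_smul {n : ℕ} (a : ℝ) (v : Fin n → ℝ) : l2 (a • v) = |a| * l2 v := by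
  simp only [l2_eq_norm]
  rw [show (WithLp.equiv 2 (Fin n → ℝ)).symm (a • v) = a • (WithLp.equiv 2 (Fin n → ℝ)).symm v from rfl]
  simp [norm_smul]

lemma l1_smul {N : ℕ} (a : ℝ) (c : Fin N → ℝ) : l1 (a • c) = |a| * l1 c := by
  simp [l1, abs_mul, Finset.mul_sum]

lemma l1_add_le {N : ℕ} (c d : Fin N → ℝ) : l1 (c + d) ≤ l1 c + l1 d := by
  rw [l1, l1, l1, ← Finset.sum_add_distrib]
  exact Finset.sum_le_sum fun i _ => abs_add_le _ _

lemma mv_smul {n N : ℕ} (A : Fin N → Fin n → ℝ) (a : ℝ) (c : Fin N → ℝ) :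
    mv A (a • c) = a • mv A c := by
  simp [mv, Finset.smul_sum, smul_smul]

lemma mv_add {n N : ℕ} (A : Fin N → Fin n → ℝ) (c d : Fin N → ℝ) :
    mv A (c + d) = mv A c + mv A d := by
  simp [mv, add_smul, Finset.sum_add_distrib]

lemma symmHull_subset {n N : ℕ} (X : Fin N → Fin n → ℝ) :
    symmHull X ⊆ {v | ∃ d : Fin N → ℝ, mv X d = v ∧ l1 d ≤ 1} := by
  apply convexHull_min
  · rintro v (⟨j, rfl⟩ | ⟨j, rfl⟩)
    · exact ⟨Pi.single j 1, by simp [mv, Pi.single_apply, Finset.sum_ite_eq'],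
        by simp [l1, Pi.single_apply, apply_ite abs, Finset.sum_ite_eq']⟩
    · exact ⟨Pi.single j (-1), by simp [mv, Pi.single_apply, Finset.sum_ite_eq', ite_smul],
        by simp [l1, Pi.single_apply, apply_ite abs, Finset.sum_ite_eq']⟩
  · rintro v ⟨d, rfl, hd⟩ w ⟨e, rfl, he⟩ a b ha hb hab
    refine ⟨a • d + b • e, by rw [mv_add, mv_smul, mv_smul], ?_⟩
    calc l1 (a • d + b • e) ≤ l1 (a • d) + l1 (b • e) := l1_add_le _ _
      _ = a * l1 d + b * l1 e := by rw [l1_smul, l1_smul, abs_of_nonneg ha, abs_of_nonneg hb]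
      _ ≤ a * 1 + b * 1 := by gcongr
      _ = 1 := by linarith

/-- ℓ1-norm bound for noisy constrained recovery. -/
theorem stmt_15 {n Ni M : ℕ} (S : Submodule ℝ (Fin n → ℝ))
    (Xi Zi : Fin Ni → Fin n → ℝ) (Ymi : Fin M → Fin n → ℝ)
    (hXS : ∀ j, Xi j ∈ S) (hXunit : ∀ j, l2 (Xi j) = 1)
    (hspan : Submodule.span ℝ (Set.range Xi) = S)
    (r ε K : ℝ) (hr : 0 < r) (hε : 0 < ε) (hK : 0 < K)
    (hball : ∀ v ∈ S, l2 v ≤ r → v ∈ symmHull Xi)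
    (Yi : Fin Ni → Fin n → ℝ) (hYi : ∀ j, Yi j = Xi j + Zi j)
    (hZop : ∀ c : Fin Ni → ℝ, l2 (mv Zi c) ≤ K * ε * l1 c)
    (y x z : Fin n → ℝ) (hy : y = x + z) (hxS : x ∈ S) (hxunit : l2 x = 1)
    (hz : l2 z ≤ ε)
    (γ : ℝ) (hγ : γ = 2 * (1 + K / r))
    (ci : Fin Ni → ℝ) (cmi : Fin M → ℝ)
    (hfeas : l2 (y - mv Yi ci - mv Ymi cmi) ≤ γ * ε)
    (hopt : ∀ (di : Fin Ni → ℝ) (dmi : Fin M → ℝ),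
      l2 (y - mv Yi di - mv Ymi dmi) ≤ γ * ε → l1 ci + l1 cmi ≤ l1 di + l1 dmi) :
    l1 ci + l1 cmi ≤ 1 / r := by
  -- r • x lies in the symmetrized hull
  have hrx : (r • x) ∈ symmHull Xi := by
    apply hball _ (S.smul_mem r hxS)
    rw [l2_smul, hxunit, abs_of_pos hr, mul_one]
  obtain ⟨d, hdx, hd1⟩ := symmHull_subset Xi hrx
  -- rescale
  set e : Fin Ni → ℝ := r⁻¹ • d with he
  have hex : mv Xi e = x := by
    rw [he, mv_smul, hdx, smul_smul, inv_mul_cancel₀ hr.ne', one_smul]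
  have hel1 : l1 e ≤ 1 / r := by
    rw [he, l1_smul, abs_of_pos (inv_pos.mpr hr)]
    rw [one_div]
    calc r⁻¹ * l1 d ≤ r⁻¹ * 1 := by gcongr
      _ = r⁻¹ := mul_one _
  -- feasibility of (e, 0)
  have hYe : mv Yi e = mv Xi e + mv Zi e := by
    simp [mv, hYi, smul_add, Finset.sum_add_distrib]
  have hres : y - mv Yi e - mv Ymi (0 : Fin M → ℝ) = z + (-1 : ℝ) • mv Zi e := by
    have h0 : mv Ymi (0 : Fin M → ℝ) = 0 := by simp [mv]
    rw [h0, hy, hYe, hex]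
    funext i
    simp only [Pi.add_apply, Pi.sub_apply, Pi.zero_apply, Pi.smul_apply, smul_eq_mul]
    ring
  have hfeas' : l2 (y - mv Yi e - mv Ymi (0 : Fin M → ℝ)) ≤ γ * ε := by
    rw [hres]
    have h1 : l2 (z + (-1 : ℝ) • mv Zi e) ≤ l2 z + l2 ((-1 : ℝ) • mv Zi e) := l2_add_le _ _
    have h2 : l2 ((-1 : ℝ) • mv Zi e) = l2 (mv Zi e) := by rw [l2_smul]; norm_num
    have h3 : l2 (mv Zi e) ≤ K * ε * (1 / r) := by
      calc l2 (mv Zi e) ≤ K * ε * l1 e := hZop e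
        _ ≤ K * ε * (1 / r) := by gcongr <;> positivity
    have hKr : 0 < K / r := div_pos hK hr
    calc l2 (z + (-1 : ℝ) • mv Zi e) ≤ l2 z + l2 (mv Zi e) := by rw [← h2]; exact h1
      _ ≤ ε + K * ε * (1 / r) := add_le_add hz h3
      _ = ε * (1 + K / r) := by field_simp
      _ ≤ 2 * (1 + K / r) * ε := by nlinarith
      _ = γ * ε := by rw [hγ]
  have := hopt e 0 hfeas'
  have h0 : l1 (0 : Fin M → ℝ) = 0 := by simp [l1]
  rw [h0, add_zero] at this
  exact this.trans hel1
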